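/- Let a, b, c, k_f be real numbers with a ≠ 0, and let x be a real number with (c − x)/a > 0. Define ψ(x) = 2a·√((c − x)/a) + b and the phase profile φ(x) = (k_f/(4a))·[ arcsinh(ψ(x)) + (2b − ψ(x))·√(ψ(x)² + 1) ]. Then φ is differentiable at x and its derivative satisfies φ′(x) = k_f · ψ(x)/√(1 + ψ(x)²). (That is, φ satisfies the caustic design equation dφ/dx = k_f · f′(z)/√(1 + f′(z)²) under the tangent-ray correspondence between aperture points x and points on the parabola x = f(z) = az² + bz + c, where the slope at the corresponding curve point is ψ(x).) -/

import Mathlib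

/-- Proposition 1: the phase profile
`φ(x) = (k_f/(4a)) [arcsinh(ψ(x)) + (2b − ψ(x))√(ψ(x)² + 1)]`,
with `ψ(x) = 2a√((c−x)/a) + b`, satisfies the caustic design equation
`φ′(x) = k_f · ψ(x)/√(1 + ψ(x)²)` at every aperture point with `(c − x)/a > 0`. -/
theorem phase_profile_hasDerivAt (a b c kf x : ℝ) (ha : a ≠ 0)
    (hx : (c - x) / a > 0) :
    HasDerivAt
      (fun y : ℝ =>
        kf / (4 * a) *
          (Real.arsinh (2 * a * Real.sqrt ((c - y) / a) + b) +
            (2 * b - (2 * a * Real.sqrt ((c - y) / a) + b)) *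
              Real.sqrt ((2 * a * Real.sqrt ((c - y) / a) + b) ^ 2 + 1)))
      (kf * (2 * a * Real.sqrt ((c - x) / a) + b) /
        Real.sqrt (1 + (2 * a * Real.sqrt ((c - x) / a) + b) ^ 2)) x := by
  set u := Real.sqrt ((c - x) / a) with hu_def
  have hu : 0 < u := Real.sqrt_pos.mpr hx
  have hune : u ≠ 0 := ne_of_gt hu
  have hu2 : u ^ 2 = (c - x) / a := Real.sq_sqrt hx.le
  set ψ : ℝ := 2 * a * u + b with hψ_def
  have hs2pos : (0:ℝ) < ψ ^ 2 + 1 := by positivity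
  set s := Real.sqrt (ψ ^ 2 + 1) with hs_def
  have hs : 0 < s := Real.sqrt_pos.mpr hs2pos
  have hsne : s ≠ 0 := ne_of_gt hs
  have hs2 : s ^ 2 = ψ ^ 2 + 1 := Real.sq_sqrt hs2pos.le
  -- derivative of inner affine map
  have h1 : HasDerivAt (fun y : ℝ => (c - y) / a) (-1 / a) x := by
    simpa using ((hasDerivAt_id x).const_sub c).div_const a
  have h2 : HasDerivAt (fun y : ℝ => Real.sqrt ((c - y) / a))
      (-1 / a / (2 * u)) x := h1.sqrt (ne_of_gt hx)
  have hψ : HasDerivAt (fun y : ℝ => 2 * a * Real.sqrt ((c - y) / a) + b)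
      (2 * a * (-1 / a / (2 * u))) x := (h2.const_mul (2 * a)).add_const b
  have harsinh : HasDerivAt
      (fun y : ℝ => Real.arsinh (2 * a * Real.sqrt ((c - y) / a) + b))
      ((Real.sqrt (1 + ψ ^ 2))⁻¹ • (2 * a * (-1 / a / (2 * u)))) x := hψ.arsinh
  have hinner : HasDerivAt
      (fun y : ℝ => (2 * a * Real.sqrt ((c - y) / a) + b) ^ 2 + 1)
      (2 * ψ ^ 1 * (2 * a * (-1 / a / (2 * u)))) x := (hψ.pow 2).add_const 1
  have hsqrt2 : HasDerivAt
      (fun y : ℝ => Real.sqrt ((2 * a * Real.sqrt ((c - y) / a) + b) ^ 2 + 1))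
      (2 * ψ ^ 1 * (2 * a * (-1 / a / (2 * u))) / (2 * s)) x :=
    hinner.sqrt (ne_of_gt hs2pos)
  have hleft : HasDerivAt
      (fun y : ℝ => 2 * b - (2 * a * Real.sqrt ((c - y) / a) + b))
      (-(2 * a * (-1 / a / (2 * u)))) x := hψ.const_sub (2 * b)
  have hprod := hleft.mul hsqrt2
  have htot := ((harsinh.add hprod).const_mul (kf / (4 * a)))
  convert htot using 1
  case e'_4 => rfl
  case e'_5 => rfl
  case e'_8 => rfl
  have h1ψ : Real.sqrt (1 + ψ ^ 2) = s := by rw [hs_def, add_comm]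
  have hfold : Real.sqrt ((2 * a * Real.sqrt ((c - x) / a) + b) ^ 2 + 1) = s := rfl
  have hd : 2 * a * (-1 / a / (2 * u)) = -1 / u := by field_simp
  have hψb : ψ - b = 2 * a * u := by rw [hψ_def]; ring
  have hfoldψ : 2 * a * Real.sqrt ((c - x) / a) + b = ψ := rfl
  rw [h1ψ, hfold, hd, smul_eq_mul, hfoldψ, pow_one]
  clear_value u ψ s
  rw [div_eq_iff hsne, eq_comm]
  have hs2' : s * s = ψ ^ 2 + 1 := by rw [← sq]; exact hs2
  field_simp
  linear_combination kf * hs2' + (2 * kf * ψ) * hψb
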